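/- arXiv:2203.11895 — 2 statements merged into one kernel-verified Lean document; each statement's English description precedes it below -/
import Mathlib

section
/- Let S_Z be an orbital fuzzy iterated function system with contraction constant C ∈ [0,1). Then for every u ∈ F*_S and every n ∈ ℕ, d_∞(Z^[n](u), u_u) ≤ (C^n/(1−C))·diam(F_S(supp u) ∪ supp u), where u_u = lim_m Z^[m](u). -/
open Metric Filter Topology Set

/-- The orbit of a point `x` under the family of maps `f i`:
`x` together with all images of `x` under finite compositions of the `f i`. -/
def orbitIFS {X I : Type*} (f : I → X → X) (x : X) : Set X :=
  ⋃ l : List I, {l.foldr (fun i y => f i y) x}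

/-- The fractal (Hutchinson–Barnsley) operator `K ↦ ⋃ i, f i '' K`. -/
def fractalOp {X I : Type*} (f : I → X → X) (K : Set X) : Set X :=
  ⋃ i, f i '' K

/-- Image of a fuzzy set under a map: `f(u)(y) = sup_{x ∈ f⁻¹ y} u x` (0 if empty). -/
noncomputable def fuzzyImage {X : Type*} (g : X → X) (u : X → ℝ) : X → ℝ :=
  fun y => sSup (u '' (g ⁻¹' {y}))

/-- The fuzzy Hutchinson–Barnsley operator `Z(u) = ∨ i, ρ i (f i (u))`. -/
noncomputable def Zop {X I : Type*} (f : I → X → X) (ρ : I → ℝ → ℝ) (u : X → ℝ) : X → ℝ :=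
  fun y => ⨆ i, ρ i (fuzzyImage (f i) u y)

/-- The metric `d_∞(u,v) = sup_{α ∈ (0,1]} h([u]^α, [v]^α)`. -/
noncomputable def dInfty {X : Type*} [MetricSpace X] (u v : X → ℝ) : ℝ :=
  ⨆ α : Ioc (0:ℝ) 1, hausdorffDist {x | (α:ℝ) ≤ u x} {x | (α:ℝ) ≤ v x}

/-- The support of a fuzzy set: the closure of `{x | 0 < u x}`. -/
def fsupp {X : Type*} [MetricSpace X] (u : X → ℝ) : Set X := closure {x | 0 < u x}

/-- The crisp fuzzy point `δ_s`. -/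
def fdelta {X : Type*} [DecidableEq X] (s : X) : X → ℝ := fun t => if t = s then 1 else 0

/-- `u^x` : the restriction of `u` to the closure of the orbit of `w` (zero outside). -/
noncomputable def restrictO {X I : Type*} [MetricSpace X] (f : I → X → X) (u : X → ℝ)
    (w : X) : X → ℝ :=
  (closure (orbitIFS f w)).indicator u

/-- A normal compactly supported fuzzy set (with values in `[0,1]`). -/
def IsFuzzyN {X : Type*} [MetricSpace X] (u : X → ℝ) : Prop :=
  (∀ x, u x ∈ Icc (0:ℝ) 1) ∧ (∃ x, u x = 1) ∧ IsCompact (fsupp u)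

/-- An upper semicontinuous normal compactly supported fuzzy set: membership in `F*_X`. -/
def IsFuzzyStar {X : Type*} [MetricSpace X] (u : X → ℝ) : Prop :=
  IsFuzzyN u ∧ UpperSemicontinuous u

/-- Membership in `F*_S`: for each point of positive membership there is an orbit
containing it together with a point of membership one. -/
def InFS {X I : Type*} [MetricSpace X] (f : I → X → X) (u : X → ℝ) : Prop :=
  IsFuzzyStar u ∧ ∀ x, 0 < u x → ∃ w y, x ∈ orbitIFS f w ∧ y ∈ orbitIFS f w ∧ u y = 1

/-- The orbital contraction condition. -/
def OrbitalContr {X I : Type*} [MetricSpace X] (f : I → X → X) (C : ℝ) : Prop :=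
  ∀ i x, ∀ y ∈ orbitIFS f x, ∀ z ∈ orbitIFS f x, dist (f i y) (f i z) ≤ C * dist y z

/-- An admissible system of grey level maps. -/
def Admissible {I : Type*} (ρ : I → ℝ → ℝ) : Prop :=
  (∀ i, ρ i 0 = 0) ∧ (∀ i, MonotoneOn (ρ i) (Icc (0:ℝ) 1)) ∧
  (∀ i, ∀ t ∈ Icc (0:ℝ) 1, ContinuousWithinAt (ρ i) (Ici t) t) ∧
  (∀ i, ∀ t ∈ Icc (0:ℝ) 1, ρ i t ∈ Icc (0:ℝ) 1) ∧ (∃ j, ρ j 1 = 1)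

set_option linter.unusedSectionVars false
set_option linter.unusedVariables false

namespace Stmt16Proof

variable {X I : Type*} [MetricSpace X] [Finite I] [Nonempty I]
variable {f : I → X → X} {ρ : I → ℝ → ℝ} {C : ℝ} {v : X → ℝ} {g : X → X}

structure Good (v : X → ℝ) : Prop where
  mem : ∀ x, v x ∈ Icc (0:ℝ) 1
  usc : UpperSemicontinuous v
  cpt : IsCompact (fsupp v)
  norm : ∃ x, v x = 1

lemma bddAbove_im (hv : ∀ x, v x ∈ Icc (0:ℝ) 1) (g : X → X) (y : X) :
    BddAbove (v '' (g ⁻¹' {y})) :=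
  ⟨1, by rintro b ⟨x, -, rfl⟩; exact (hv x).2⟩

lemma fuzzyImage_mem_Icc (hv : ∀ x, v x ∈ Icc (0:ℝ) 1) (g : X → X) (y : X) :
    fuzzyImage g v y ∈ Icc (0:ℝ) 1 := by
  rcases (v '' (g ⁻¹' {y})).eq_empty_or_nonempty with h | h
  · simp [fuzzyImage, h, Real.sSup_empty]
  · constructor
    · obtain ⟨b, hb⟩ := h
      have hb0 : 0 ≤ b := by rcases hb with ⟨x, -, rfl⟩; exact (hv x).1
      exact hb0.trans (le_csSup (bddAbove_im hv g y) hb)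
    · exact csSup_le h (by rintro b ⟨x, -, rfl⟩; exact (hv x).2)

lemma le_fuzzyImage (hv : ∀ x, v x ∈ Icc (0:ℝ) 1) {g : X → X} {x y : X} (hxy : g x = y) :
    v x ≤ fuzzyImage g v y :=
  le_csSup (bddAbove_im hv g y) ⟨x, hxy, rfl⟩

lemma fuzzyImage_pos {g : X → X} {y : X} (h : 0 < fuzzyImage g v y) :
    ∃ x, g x = y ∧ 0 < v x := by
  have hne : (v '' (g ⁻¹' {y})).Nonempty := by
    rcases (v '' (g ⁻¹' {y})).eq_empty_or_nonempty with he | he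
    · exfalso; rw [fuzzyImage, he, Real.sSup_empty] at h; exact lt_irrefl 0 h
    · exact he
  obtain ⟨b, hb, hb0⟩ := exists_lt_of_lt_csSup hne h
  rcases hb with ⟨x, hx, rfl⟩
  exact ⟨x, hx, hb0⟩

lemma superlevel_closed (hv : UpperSemicontinuous v) (r : ℝ) : IsClosed {x | r ≤ v x} :=
  hv.isClosed_preimage r

lemma superlevel_compact (hv : Good v) {r : ℝ} (hr : 0 < r) : IsCompact {x | r ≤ v x} :=
  hv.cpt.of_isClosed_subset (superlevel_closed hv.usc r)
    (fun x hx => subset_closure (lt_of_lt_of_le hr hx))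

lemma fuzzyImage_attained (hv : Good v) {g : X → X} (hg : Continuous g) {y : X}
    (h : 0 < fuzzyImage g v y) : ∃ x, g x = y ∧ v x = fuzzyImage g v y := by
  set s := fuzzyImage g v y with hs
  have hne : (v '' (g ⁻¹' {y})).Nonempty := by
    rcases (v '' (g ⁻¹' {y})).eq_empty_or_nonempty with he | he
    · exfalso; rw [hs, fuzzyImage, he, Real.sSup_empty] at h; exact lt_irrefl 0 h
    · exact he
  set T : ℕ → Set X := fun n => (g ⁻¹' {y}) ∩ {x | max (s/2) (s - 1/(n+1)) ≤ v x} with hT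
  have hTne : ∀ n, (T n).Nonempty := by
    intro n
    have hlt : max (s/2) (s - 1/((n:ℝ)+1)) < s := by
      apply max_lt (by linarith)
      have : (0:ℝ) < 1/((n:ℝ)+1) := by positivity
      linarith
    obtain ⟨b, hb, hbl⟩ := exists_lt_of_lt_csSup hne hlt
    rcases hb with ⟨x, hx, rfl⟩
    exact ⟨x, hx, le_of_lt hbl⟩
  have hTcl : ∀ n, IsClosed (T n) :=
    fun n => (IsClosed.preimage hg isClosed_singleton).inter (superlevel_closed hv.usc _)
  have hT0 : IsCompact (T 0) := by
    refine IsCompact.inter_left ?_ (IsClosed.preimage hg isClosed_singleton)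
    exact superlevel_compact hv (lt_of_lt_of_le (show (0:ℝ) < s/2 by linarith) (le_max_left _ _))
  have hTsub : ∀ n, T (n+1) ⊆ T n := by
    intro n x hx
    refine ⟨hx.1, ?_⟩
    have hx2 := hx.2
    simp only [mem_setOf_eq, Nat.cast_add, Nat.cast_one] at hx2 ⊢
    have h1 : (1:ℝ)/((n:ℝ)+1+1) ≤ 1/((n:ℝ)+1) := by
      apply one_div_le_one_div_of_le (by positivity); linarith
    exact le_trans (max_le_max le_rfl (by linarith)) hx2
  obtain ⟨x, hx⟩ := IsCompact.nonempty_iInter_of_sequence_nonempty_isCompact_isClosed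
    T hTsub hTne hT0 hTcl
  have hxfib : g x = y := (mem_iInter.1 hx 0).1
  have hxge : ∀ n : ℕ, s - 1/((n:ℝ)+1) ≤ v x :=
    fun n => le_trans (le_max_right _ _) (mem_iInter.1 hx n).2
  have hge : s ≤ v x := by
    by_contra hlt
    push_neg at hlt
    obtain ⟨n, hn⟩ := exists_nat_one_div_lt (show (0:ℝ) < s - v x by linarith)
    have := hxge n
    linarith
  exact ⟨x, hxfib, le_antisymm (le_csSup (bddAbove_im hv.mem g y) ⟨x, hxfib, rfl⟩) hge⟩

lemma le_Zop (i : I) (y : X) :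
    ρ i (fuzzyImage (f i) v y) ≤ Zop f ρ v y :=
  le_ciSup (Set.Finite.bddAbove (Set.finite_range (fun j => ρ j (fuzzyImage (f j) v y)))) i

lemma Zop_attained (y : X) : ∃ i, Zop f ρ v y = ρ i (fuzzyImage (f i) v y) := by
  obtain ⟨i, hi⟩ := Finite.exists_max (fun i => ρ i (fuzzyImage (f i) v y))
  exact ⟨i, le_antisymm (ciSup_le hi) (le_Zop i y)⟩

lemma Zop_mem_Icc (hρ : Admissible ρ) (hv : ∀ x, v x ∈ Icc (0:ℝ) 1) (y : X) :
    Zop f ρ v y ∈ Icc (0:ℝ) 1 := by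
  obtain ⟨i, hi⟩ := Zop_attained (v := v) (f := f) (ρ := ρ) y
  constructor
  · rw [hi]; exact (hρ.2.2.2.1 i _ (fuzzyImage_mem_Icc hv _ y)).1
  · exact ciSup_le fun i => (hρ.2.2.2.1 i _ (fuzzyImage_mem_Icc hv _ y)).2

lemma rho_level (hρ : Admissible ρ) (i : I) {β : ℝ} (hβ : 0 < β)
    (hne : {t | t ∈ Icc (0:ℝ) 1 ∧ β ≤ ρ i t}.Nonempty) :
    ∃ r : ℝ, 0 < r ∧ r ∈ Icc (0:ℝ) 1 ∧ ∀ t ∈ Icc (0:ℝ) 1, (β ≤ ρ i t ↔ r ≤ t) := by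
  set T := {t | t ∈ Icc (0:ℝ) 1 ∧ β ≤ ρ i t} with hT
  have hbdd : BddBelow T := ⟨0, fun t ht => ht.1.1⟩
  set r := sInf T with hr
  obtain ⟨t₀, ht₀⟩ := id hne
  have hr0 : 0 ≤ r := le_csInf hne (fun t ht => ht.1.1)
  have hr1 : r ≤ 1 := le_trans (csInf_le hbdd ht₀) ht₀.1.2
  have hrT : ∀ t ∈ T, r ≤ t := fun t ht => csInf_le hbdd ht
  have hcl : r ∈ closure T := csInf_mem_closure hne hbdd
  have hρr : β ≤ ρ i r := by
    have hcw : ContinuousWithinAt (ρ i) (Ici r) r := hρ.2.2.1 i r ⟨hr0, hr1⟩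
    have h2 : Tendsto (ρ i) (𝓝[T] r) (𝓝 (ρ i r)) :=
      hcw.mono_left (nhdsWithin_mono r (fun t ht => hrT t ht))
    have h3 : ∀ᶠ t in 𝓝[T] r, β ≤ ρ i t :=
      eventually_mem_nhdsWithin.mono (fun t ht => ht.2)
    haveI : (𝓝[T] r).NeBot := mem_closure_iff_nhdsWithin_neBot.1 hcl
    exact ge_of_tendsto h2 h3
  have hrpos : 0 < r := by
    rcases lt_or_eq_of_le hr0 with h | h
    · exact h
    · exfalso; rw [← h] at hρr; rw [hρ.1 i] at hρr; linarith
  refine ⟨r, hrpos, ⟨hr0, hr1⟩, fun t ht => ⟨fun h => hrT t ⟨ht, h⟩, fun h => ?_⟩⟩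
  exact le_trans hρr (hρ.2.1 i ⟨hr0, hr1⟩ ht h)

lemma fuzzyImage_superlevel (hv : Good v) {g : X → X} (hg : Continuous g) {r : ℝ}
    (hr : 0 < r) : {y | r ≤ fuzzyImage g v y} = g '' {x | r ≤ v x} := by
  ext y
  constructor
  · intro hy
    obtain ⟨x, hx, hvx⟩ := fuzzyImage_attained hv hg (lt_of_lt_of_le hr hy)
    exact ⟨x, by rw [mem_setOf_eq, hvx]; exact hy, hx⟩
  · rintro ⟨x, hx, rfl⟩
    exact le_trans hx (le_fuzzyImage hv.mem rfl)

lemma Zop_pos_subset (hρ : Admissible ρ) (hv : ∀ x, v x ∈ Icc (0:ℝ) 1) :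
    {y | 0 < Zop f ρ v y} ⊆ ⋃ i, f i '' {x | 0 < v x} := by
  intro y hy
  obtain ⟨i, hi⟩ := Zop_attained (v := v) (f := f) (ρ := ρ) y
  rw [mem_setOf_eq, hi] at hy
  have hs : 0 < fuzzyImage (f i) v y := by
    rcases lt_or_eq_of_le (fuzzyImage_mem_Icc hv (f i) y).1 with h | h
    · exact h
    · exfalso; rw [← h, hρ.1 i] at hy; exact lt_irrefl 0 hy
  obtain ⟨x, hx, hxv⟩ := fuzzyImage_pos hs
  exact mem_iUnion.2 ⟨i, x, hxv, hx⟩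

lemma Zop_good (hρ : Admissible ρ) (hf : ∀ i, Continuous (f i)) (hv : Good v) :
    Good (Zop f ρ v) := by
  have hmem : ∀ x, Zop f ρ v x ∈ Icc (0:ℝ) 1 := Zop_mem_Icc hρ hv.mem
  refine ⟨hmem, ?_, ?_, ?_⟩
  · -- usc
    rw [upperSemicontinuous_iff_isClosed_preimage]
    intro β
    rcases le_or_gt β 0 with hβ | hβ
    · have : Zop f ρ v ⁻¹' Ici β = univ :=
        eq_univ_of_forall fun y => le_trans hβ (hmem y).1
      rw [this]; exact isClosed_univ
    · have heq : Zop f ρ v ⁻¹' Ici β = ⋃ i, {y | β ≤ ρ i (fuzzyImage (f i) v y)} := by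
        ext y
        constructor
        · intro hy
          obtain ⟨i, hi⟩ := Zop_attained (v := v) (f := f) (ρ := ρ) y
          exact mem_iUnion.2 ⟨i, by rw [mem_setOf_eq, ← hi]; exact hy⟩
        · intro hy
          obtain ⟨i, hi⟩ := mem_iUnion.1 hy
          exact le_trans hi (le_Zop i y)
      rw [heq]
      refine isClosed_iUnion_of_finite (fun i => ?_)
      rcases Set.eq_empty_or_nonempty {t | t ∈ Icc (0:ℝ) 1 ∧ β ≤ ρ i t} with he | hne
      · have : {y | β ≤ ρ i (fuzzyImage (f i) v y)} = ∅ := by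
          rw [eq_empty_iff_forall_notMem]
          intro y hy
          exact (eq_empty_iff_forall_notMem.1 he) (fuzzyImage (f i) v y)
            ⟨fuzzyImage_mem_Icc hv.mem (f i) y, hy⟩
        rw [this]; exact isClosed_empty
      · obtain ⟨r, hrpos, hrIcc, hiff⟩ := rho_level hρ i hβ hne
        have : {y | β ≤ ρ i (fuzzyImage (f i) v y)} = {y | r ≤ fuzzyImage (f i) v y} := by
          ext y
          exact hiff _ (fuzzyImage_mem_Icc hv.mem (f i) y)
        rw [this, fuzzyImage_superlevel hv (hf i) hrpos]
        exact ((superlevel_compact hv hrpos).image (hf i)).isClosed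
  · -- compact support
    have hK : IsCompact (⋃ i, f i '' fsupp v) :=
      isCompact_iUnion (fun i => hv.cpt.image (hf i))
    refine hK.of_isClosed_subset isClosed_closure (closure_minimal ?_ hK.isClosed)
    refine subset_trans (Zop_pos_subset hρ hv.mem) (iUnion_mono (fun i => ?_))
    exact image_mono subset_closure
  · -- normal
    obtain ⟨x₁, hx₁⟩ := hv.norm
    obtain ⟨j, hj⟩ := hρ.2.2.2.2
    have him : fuzzyImage (f j) v (f j x₁) = 1 := by
      refine le_antisymm (fuzzyImage_mem_Icc hv.mem (f j) (f j x₁)).2 ?_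
      rw [← hx₁]; exact le_fuzzyImage hv.mem rfl
    refine ⟨f j x₁, le_antisymm (hmem _).2 ?_⟩
    have := le_Zop (f := f) (ρ := ρ) (v := v) j (f j x₁)
    rw [him, hj] at this
    exact this

lemma orbit_map (i : I) {x w : X} (h : x ∈ orbitIFS f w) : f i x ∈ orbitIFS f w := by
  obtain ⟨S, ⟨l, rfl⟩, hl⟩ := h
  exact ⟨_, ⟨i :: l, rfl⟩, by rw [mem_singleton_iff] at hl ⊢; rw [hl]; rfl⟩

lemma orbit_map_closure (hf : ∀ i, Continuous (f i)) (i : I) {x w : X}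
    (h : x ∈ closure (orbitIFS f w)) : f i x ∈ closure (orbitIFS f w) :=
  (MapsTo.closure (fun x hx => orbit_map i hx) (hf i)) h

lemma orbital_closure (horb : OrbitalContr f C) (hf : ∀ i, Continuous (f i)) (i : I) (w : X)
    {a b : X} (ha : a ∈ closure (orbitIFS f w)) (hb : b ∈ closure (orbitIFS f w)) :
    dist (f i a) (f i b) ≤ C * dist a b := by
  have hS : closure (orbitIFS f w) ×ˢ closure (orbitIFS f w) ⊆
      {p : X × X | dist (f i p.1) (f i p.2) ≤ C * dist p.1 p.2} := by
    rw [← closure_prod_eq]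
    refine closure_minimal ?_ ?_
    · rintro ⟨p, q⟩ ⟨hp, hq⟩; exact horb i w p hp q hq
    · exact isClosed_le (((hf i).comp continuous_fst).dist ((hf i).comp continuous_snd))
        (continuous_const.mul (continuous_fst.dist continuous_snd))
  exact hS (Set.mk_mem_prod ha hb)

lemma good_u {u : X → ℝ} (hu : InFS f u) : Good u :=
  ⟨hu.1.1.1, hu.1.2, hu.1.1.2.2, hu.1.1.2.1⟩

lemma good_iter (hρ : Admissible ρ) (hf : ∀ i, Continuous (f i)) {u : X → ℝ}
    (hu : InFS f u) : ∀ k, Good ((Zop f ρ)^[k] u) := by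
  intro k
  induction k with
  | zero => exact good_u hu
  | succ k ih => rw [Function.iterate_succ_apply']; exact Zop_good hρ hf ih

lemma rho_pos_arg (hρ : Admissible ρ) {i : I} {t : ℝ} (ht : t ∈ Icc (0:ℝ) 1)
    (h : 0 < ρ i t) : 0 < t := by
  rcases lt_or_eq_of_le ht.1 with h' | h'
  · exact h'
  · exfalso; rw [← h', hρ.1 i] at h; exact lt_irrefl 0 h

lemma transport (hf : ∀ i, Continuous (f i)) (hC0 : 0 ≤ C) (horb : OrbitalContr f C)
    (hρ : Admissible ρ) {u : X → ℝ} (hu : InFS f u) (k : ℕ) :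
    (∀ x, 0 < (Zop f ρ)^[k+1] u x → ∃ z x',
        x ∈ closure (orbitIFS f z) ∧ x' ∈ closure (orbitIFS f z) ∧
        dist x x' ≤ C ^ k * Metric.diam (fractalOp f (fsupp u) ∪ fsupp u) ∧
        (Zop f ρ)^[k+1] u x ≤ (Zop f ρ)^[k] u x') ∧
    (∀ x, 0 < (Zop f ρ)^[k] u x → ∃ z x',
        x ∈ closure (orbitIFS f z) ∧ x' ∈ closure (orbitIFS f z) ∧
        dist x x' ≤ C ^ k * Metric.diam (fractalOp f (fsupp u) ∪ fsupp u) ∧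
        (Zop f ρ)^[k] u x ≤ (Zop f ρ)^[k+1] u x') := by
  have hUb : Bornology.IsBounded (fractalOp f (fsupp u) ∪ fsupp u) := by
    have h1 : IsCompact (fractalOp f (fsupp u)) :=
      isCompact_iUnion (fun i => hu.1.1.2.2.image (hf i))
    exact (h1.union hu.1.1.2.2).isBounded
  have hgood : ∀ m, Good ((Zop f ρ)^[m] u) := good_iter hρ hf hu
  induction k with
  | zero =>
    constructor
    · intro x hx
      simp only [zero_add, Function.iterate_one] at hx ⊢
      simp only [Function.iterate_zero, id_eq, pow_zero, one_mul]
      obtain ⟨i, hi⟩ := Zop_attained (f := f) (ρ := ρ) (v := u) x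
      rw [hi] at hx
      have hs : 0 < fuzzyImage (f i) u x :=
        rho_pos_arg hρ (fuzzyImage_mem_Icc (good_u hu).mem (f i) x) hx
      obtain ⟨x₀, hx₀f, hx₀pos⟩ := fuzzyImage_pos hs
      obtain ⟨z, ynorm, hx₀z, hyz, hy1⟩ := hu.2 x₀ hx₀pos
      refine ⟨z, ynorm, subset_closure (hx₀f ▸ orbit_map i hx₀z), subset_closure hyz, ?_, ?_⟩
      · have hxU : x ∈ fractalOp f (fsupp u) ∪ fsupp u :=
          mem_union_left _ (mem_iUnion.2 ⟨i, x₀, subset_closure hx₀pos, hx₀f⟩)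
        have hyU : ynorm ∈ fractalOp f (fsupp u) ∪ fsupp u :=
          mem_union_right _ (subset_closure (show 0 < u ynorm by rw [hy1]; norm_num))
        exact Metric.dist_le_diam_of_mem hUb hxU hyU
      · rw [hy1]; exact (Zop_mem_Icc hρ (good_u hu).mem x).2
    · intro x hx
      simp only [Function.iterate_zero, id_eq] at hx ⊢
      simp only [zero_add, Function.iterate_one, pow_zero, one_mul]
      obtain ⟨z, ynorm, hxz, hyz, hy1⟩ := hu.2 x hx
      obtain ⟨j, hj⟩ := hρ.2.2.2.2
      refine ⟨z, f j ynorm, subset_closure hxz, subset_closure (orbit_map j hyz), ?_, ?_⟩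
      · have hxU : x ∈ fractalOp f (fsupp u) ∪ fsupp u :=
          mem_union_right _ (subset_closure hx)
        have hyU : f j ynorm ∈ fractalOp f (fsupp u) ∪ fsupp u :=
          mem_union_left _ (mem_iUnion.2
            ⟨j, ynorm, subset_closure (show 0 < u ynorm by rw [hy1]; norm_num), rfl⟩)
        exact Metric.dist_le_diam_of_mem hUb hxU hyU
      · have him : fuzzyImage (f j) u (f j ynorm) = 1 :=
          le_antisymm (fuzzyImage_mem_Icc (good_u hu).mem _ _).2
            (by rw [← hy1]; exact le_fuzzyImage (good_u hu).mem rfl)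
        have h1 : (1:ℝ) ≤ Zop f ρ u (f j ynorm) := by
          have := le_Zop (f := f) (ρ := ρ) (v := u) j (f j ynorm)
          rw [him, hj] at this; exact this
        exact le_trans (hu.1.1.1 x).2 h1
  | succ k ih =>
    have hgk := hgood k
    have hgk1 := hgood (k+1)
    constructor
    · intro y hy
      rw [Function.iterate_succ_apply'] at hy
      obtain ⟨i, hi⟩ := Zop_attained (f := f) (ρ := ρ) (v := (Zop f ρ)^[k+1] u) y
      rw [hi] at hy
      have hs : 0 < fuzzyImage (f i) ((Zop f ρ)^[k+1] u) y :=
        rho_pos_arg hρ (fuzzyImage_mem_Icc hgk1.mem (f i) y) hy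
      obtain ⟨x, hxf, hxv⟩ := fuzzyImage_attained hgk1 (hf i) hs
      have hxpos : 0 < (Zop f ρ)^[k+1] u x := by rw [hxv]; exact hs
      obtain ⟨z, x', hxz, hx'z, hdist, hval⟩ := ih.1 x hxpos
      refine ⟨z, f i x', by rw [← hxf]; exact orbit_map_closure hf i hxz,
        orbit_map_closure hf i hx'z, ?_, ?_⟩
      · calc dist y (f i x') = dist (f i x) (f i x') := by rw [hxf]
          _ ≤ C * dist x x' := orbital_closure horb hf i z hxz hx'z
          _ ≤ C * (C ^ k * Metric.diam (fractalOp f (fsupp u) ∪ fsupp u)) :=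
              mul_le_mul_of_nonneg_left hdist hC0
          _ = C ^ (k+1) * Metric.diam (fractalOp f (fsupp u) ∪ fsupp u) := by ring
      · have hstep : (Zop f ρ)^[k+1+1] u y = Zop f ρ ((Zop f ρ)^[k+1] u) y := by
          rw [Function.iterate_succ_apply']
        have hstep2 : (Zop f ρ)^[k+1] u (f i x') = Zop f ρ ((Zop f ρ)^[k] u) (f i x') := by
          rw [Function.iterate_succ_apply']
        rw [hstep, hstep2, hi]
        calc ρ i (fuzzyImage (f i) ((Zop f ρ)^[k+1] u) y)
            = ρ i ((Zop f ρ)^[k+1] u x) := by rw [hxv]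
          _ ≤ ρ i ((Zop f ρ)^[k] u x') := hρ.2.1 i (hgk1.mem x) (hgk.mem x') hval
          _ ≤ ρ i (fuzzyImage (f i) ((Zop f ρ)^[k] u) (f i x')) :=
              hρ.2.1 i (hgk.mem x') (fuzzyImage_mem_Icc hgk.mem (f i) (f i x'))
                (le_fuzzyImage hgk.mem rfl)
          _ ≤ Zop f ρ ((Zop f ρ)^[k] u) (f i x') := le_Zop i (f i x')
    · intro y hy
      rw [Function.iterate_succ_apply'] at hy
      obtain ⟨i, hi⟩ := Zop_attained (f := f) (ρ := ρ) (v := (Zop f ρ)^[k] u) y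
      rw [hi] at hy
      have hs : 0 < fuzzyImage (f i) ((Zop f ρ)^[k] u) y :=
        rho_pos_arg hρ (fuzzyImage_mem_Icc hgk.mem (f i) y) hy
      obtain ⟨x, hxf, hxv⟩ := fuzzyImage_attained hgk (hf i) hs
      have hxpos : 0 < (Zop f ρ)^[k] u x := by rw [hxv]; exact hs
      obtain ⟨z, x', hxz, hx'z, hdist, hval⟩ := ih.2 x hxpos
      refine ⟨z, f i x', by rw [← hxf]; exact orbit_map_closure hf i hxz,
        orbit_map_closure hf i hx'z, ?_, ?_⟩
      · calc dist y (f i x') = dist (f i x) (f i x') := by rw [hxf]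
          _ ≤ C * dist x x' := orbital_closure horb hf i z hxz hx'z
          _ ≤ C * (C ^ k * Metric.diam (fractalOp f (fsupp u) ∪ fsupp u)) :=
              mul_le_mul_of_nonneg_left hdist hC0
          _ = C ^ (k+1) * Metric.diam (fractalOp f (fsupp u) ∪ fsupp u) := by ring
      · have hstep : (Zop f ρ)^[k+1] u y = Zop f ρ ((Zop f ρ)^[k] u) y := by
          rw [Function.iterate_succ_apply']
        have hstep2 : (Zop f ρ)^[k+1+1] u (f i x') = Zop f ρ ((Zop f ρ)^[k+1] u) (f i x') := by
          rw [Function.iterate_succ_apply']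
        rw [hstep, hstep2, hi]
        calc ρ i (fuzzyImage (f i) ((Zop f ρ)^[k] u) y)
            = ρ i ((Zop f ρ)^[k] u x) := by rw [hxv]
          _ ≤ ρ i ((Zop f ρ)^[k+1] u x') := hρ.2.1 i (hgk.mem x) (hgk1.mem x') hval
          _ ≤ ρ i (fuzzyImage (f i) ((Zop f ρ)^[k+1] u) (f i x')) :=
              hρ.2.1 i (hgk1.mem x') (fuzzyImage_mem_Icc hgk1.mem (f i) (f i x'))
                (le_fuzzyImage hgk1.mem rfl)
          _ ≤ Zop f ρ ((Zop f ρ)^[k+1] u) (f i x') := le_Zop i (f i x')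

lemma step_edist (hf : ∀ i, Continuous (f i)) (hC0 : 0 ≤ C) (horb : OrbitalContr f C)
    (hρ : Admissible ρ) {u : X → ℝ} (hu : InFS f u) (k : ℕ) {β : ℝ} (hβ : 0 < β) :
    EMetric.hausdorffEdist {x | β ≤ (Zop f ρ)^[k] u x} {x | β ≤ (Zop f ρ)^[k+1] u x}
      ≤ ENNReal.ofReal (C ^ k * Metric.diam (fractalOp f (fsupp u) ∪ fsupp u)) := by
  obtain ⟨h1, h2⟩ := transport hf hC0 horb hρ hu k
  apply EMetric.hausdorffEdist_le_of_mem_edist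
  · intro x hx
    obtain ⟨z, x', _, _, hdist, hval⟩ := h2 x (lt_of_lt_of_le hβ hx)
    exact ⟨x', le_trans hx hval, by rw [edist_dist]; exact ENNReal.ofReal_le_ofReal hdist⟩
  · intro x hx
    obtain ⟨z, x', _, _, hdist, hval⟩ := h1 x (lt_of_lt_of_le hβ hx)
    exact ⟨x', le_trans hx hval, by rw [edist_dist]; exact ENNReal.ofReal_le_ofReal hdist⟩

lemma chain_edist (hf : ∀ i, Continuous (f i)) (hC0 : 0 ≤ C) (hC1 : C < 1)
    (horb : OrbitalContr f C) (hρ : Admissible ρ) {u : X → ℝ} (hu : InFS f u)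
    {n m : ℕ} (hnm : n ≤ m) {β : ℝ} (hβ : 0 < β) :
    EMetric.hausdorffEdist {x | β ≤ (Zop f ρ)^[n] u x} {x | β ≤ (Zop f ρ)^[m] u x}
      ≤ ENNReal.ofReal (C ^ n / (1 - C) * Metric.diam (fractalOp f (fsupp u) ∪ fsupp u)) := by
  set D := Metric.diam (fractalOp f (fsupp u) ∪ fsupp u) with hD
  have hDnn : 0 ≤ D := Metric.diam_nonneg
  have key : ∀ m', n ≤ m' → EMetric.hausdorffEdist {x | β ≤ (Zop f ρ)^[n] u x}
      {x | β ≤ (Zop f ρ)^[m'] u x} ≤ ENNReal.ofReal ((∑ k ∈ Finset.Ico n m', C ^ k) * D) := by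
    intro m' hm'
    induction m', hm' using Nat.le_induction with
    | base => simp [EMetric.hausdorffEdist, Metric.hausdorffEDist_self]
    | succ m' hm' ih =>
      refine le_trans (EMetric.hausdorffEdist_triangle
        (t := {x | β ≤ (Zop f ρ)^[m'] u x})) ?_
      have h2 := step_edist hf hC0 horb hρ hu m' hβ
      refine le_trans (add_le_add ih h2) ?_
      rw [← ENNReal.ofReal_add (mul_nonneg (Finset.sum_nonneg fun k _ => pow_nonneg hC0 k) hDnn)
        (mul_nonneg (pow_nonneg hC0 m') hDnn)]
      apply ENNReal.ofReal_le_ofReal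
      rw [Finset.sum_Ico_succ_top hm', add_mul]
  refine le_trans (key m hnm) (ENNReal.ofReal_le_ofReal ?_)
  exact mul_le_mul_of_nonneg_right (geom_sum_Ico_le_of_lt_one hC0 hC1) hDnn

lemma chain_ne_top (hf : ∀ i, Continuous (f i)) (hC0 : 0 ≤ C) (hC1 : C < 1)
    (horb : OrbitalContr f C) (hρ : Admissible ρ) {u : X → ℝ} (hu : InFS f u)
    {n m : ℕ} (hnm : n ≤ m) {β : ℝ} (hβ : 0 < β) :
    EMetric.hausdorffEdist {x | β ≤ (Zop f ρ)^[n] u x} {x | β ≤ (Zop f ρ)^[m] u x} ≠ ⊤ :=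
  (lt_of_le_of_lt (chain_edist hf hC0 hC1 horb hρ hu hnm hβ) ENNReal.ofReal_lt_top).ne

lemma chain_dist (hf : ∀ i, Continuous (f i)) (hC0 : 0 ≤ C) (hC1 : C < 1)
    (horb : OrbitalContr f C) (hρ : Admissible ρ) {u : X → ℝ} (hu : InFS f u)
    {n m : ℕ} (hnm : n ≤ m) {β : ℝ} (hβ : 0 < β) :
    hausdorffDist {x | β ≤ (Zop f ρ)^[n] u x} {x | β ≤ (Zop f ρ)^[m] u x}
      ≤ C ^ n / (1 - C) * Metric.diam (fractalOp f (fsupp u) ∪ fsupp u) :=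
  ENNReal.toReal_le_of_le_ofReal
    (mul_nonneg (div_nonneg (pow_nonneg hC0 n) (by linarith)) Metric.diam_nonneg)
    (chain_edist hf hC0 hC1 horb hρ hu hnm hβ)

end Stmt16Proof

/-- Remark 2.13 b): the a priori rate of convergence of the Picard
iterates of `Z`. -/
theorem stmt16 {X I : Type*} [MetricSpace X] [CompleteSpace X] [DecidableEq X]
    [Finite I] [Nonempty I]
    (f : I → X → X) (hcont : ∀ i, Continuous (f i))
    (C : ℝ) (hC0 : 0 ≤ C) (hC1 : C < 1) (horb : OrbitalContr f C)
    (ρ : I → ℝ → ℝ) (hρ : Admissible ρ)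
    (u : X → ℝ) (hu : InFS f u)
    (uu : X → ℝ)
    (huu : Tendsto (fun n => dInfty ((Zop f ρ)^[n] u) uu) atTop (nhds 0)) :
    ∀ n : ℕ, dInfty ((Zop f ρ)^[n] u) uu ≤
      (C ^ n / (1 - C)) * Metric.diam (fractalOp f (fsupp u) ∪ fsupp u) := by
  intro n
  set D := Metric.diam (fractalOp f (fsupp u) ∪ fsupp u) with hD
  have hDnn : 0 ≤ D := Metric.diam_nonneg
  have h1C : (0:ℝ) < 1 - C := by linarith
  have hEnn : 0 ≤ C ^ n / (1 - C) * D :=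
    mul_nonneg (div_nonneg (pow_nonneg hC0 n) (le_of_lt h1C)) hDnn
  by_cases hbdd : BddAbove (range fun α : Ioc (0:ℝ) 1 =>
      hausdorffDist {x | (α:ℝ) ≤ (Zop f ρ)^[n] u x} {x | (α:ℝ) ≤ uu x})
  · have key : ∀ m, n ≤ m → dInfty ((Zop f ρ)^[n] u) uu ≤
        C ^ n / (1 - C) * D + dInfty ((Zop f ρ)^[m] u) uu := by
      intro m hm
      obtain ⟨M, hM⟩ := hbdd
      have hMα : ∀ α : Ioc (0:ℝ) 1,
          hausdorffDist {x | (α:ℝ) ≤ (Zop f ρ)^[n] u x} {x | (α:ℝ) ≤ uu x} ≤ M :=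
        fun α => hM ⟨α, rfl⟩
      have hbddm : BddAbove (range fun α : Ioc (0:ℝ) 1 =>
          hausdorffDist {x | (α:ℝ) ≤ (Zop f ρ)^[m] u x} {x | (α:ℝ) ≤ uu x}) := by
        refine ⟨C ^ n / (1 - C) * D + M, ?_⟩
        rintro r ⟨α, rfl⟩
        have hfin : EMetric.hausdorffEdist {x | (α:ℝ) ≤ (Zop f ρ)^[m] u x}
            {x | (α:ℝ) ≤ (Zop f ρ)^[n] u x} ≠ ⊤ := by
          rw [EMetric.hausdorffEdist, Metric.hausdorffEDist_comm]
          exact Stmt16Proof.chain_ne_top hcont hC0 hC1 horb hρ hu hm α.2.1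
        refine le_trans (Metric.hausdorffDist_triangle hfin) (add_le_add ?_ (hMα α))
        rw [Metric.hausdorffDist_comm]
        exact Stmt16Proof.chain_dist hcont hC0 hC1 horb hρ hu hm α.2.1
      have hper : ∀ α : Ioc (0:ℝ) 1,
          hausdorffDist {x | (α:ℝ) ≤ (Zop f ρ)^[n] u x} {x | (α:ℝ) ≤ uu x}
          ≤ C ^ n / (1 - C) * D + dInfty ((Zop f ρ)^[m] u) uu := by
        intro α
        have hfin : EMetric.hausdorffEdist {x | (α:ℝ) ≤ (Zop f ρ)^[n] u x}
            {x | (α:ℝ) ≤ (Zop f ρ)^[m] u x} ≠ ⊤ :=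
          Stmt16Proof.chain_ne_top hcont hC0 hC1 horb hρ hu hm α.2.1
        refine le_trans (Metric.hausdorffDist_triangle hfin) (add_le_add ?_ ?_)
        · exact Stmt16Proof.chain_dist hcont hC0 hC1 horb hρ hu hm α.2.1
        · exact le_ciSup hbddm α
      exact Real.iSup_le hper
        (add_nonneg hEnn (Real.iSup_nonneg fun α => Metric.hausdorffDist_nonneg))
    have htend : Tendsto (fun m => C ^ n / (1 - C) * D + dInfty ((Zop f ρ)^[m] u) uu) atTop
        (nhds (C ^ n / (1 - C) * D + 0)) := tendsto_const_nhds.add huu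
    have hle := ge_of_tendsto htend (eventually_atTop.2 ⟨n, fun m hm => key m hm⟩)
    rw [add_zero] at hle
    exact hle
  · have : dInfty ((Zop f ρ)^[n] u) uu = 0 := Real.iSup_of_not_bddAbove hbdd
    rw [this]
    exact hEnn
end

section
/- Let (X,d) be a complete metric space. Then the space F*_X of upper semicontinuous, normal, compactly supported fuzzy subsets of X, equipped with the metric d_∞(u,v) = sup_{α∈(0,1]} h([u]^α, [v]^α), is a complete metric space. -/
open Metric Filter Topology Set

instance : Nonempty (Ioc (0:ℝ) 1) := ⟨⟨1, by norm_num⟩⟩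

section Aux
variable {X : Type*} [MetricSpace X]

def lev (u : X → ℝ) (α : ℝ) : Set X := {x | α ≤ u x}

lemma dInfty_eq (u v : X → ℝ) :
    dInfty u v = ⨆ α : Ioc (0:ℝ) 1, hausdorffDist (lev u α) (lev v α) := rfl

lemma lev_subset_fsupp (u : X → ℝ) {α : ℝ} (hα : 0 < α) : lev u α ⊆ fsupp u :=
  fun _ hx => subset_closure (lt_of_lt_of_le hα hx)

lemma lev_closed {u : X → ℝ} (hu : IsFuzzyStar u) (α : ℝ) : IsClosed (lev u α) :=
  hu.2.isClosed_preimage α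

lemma lev_compact {u : X → ℝ} (hu : IsFuzzyStar u) {α : ℝ} (hα : 0 < α) :
    IsCompact (lev u α) :=
  IsCompact.of_isClosed_subset hu.1.2.2 (lev_closed hu α) (lev_subset_fsupp u hα)

lemma lev_nonempty {u : X → ℝ} (hu : IsFuzzyStar u) {α : ℝ} (hα : α ≤ 1) :
    (lev u α).Nonempty := by
  obtain ⟨x, hx⟩ := hu.1.2.1
  exact ⟨x, by simp [lev, hx, hα]⟩

lemma lev_anti (u : X → ℝ) {α β : ℝ} (h : α ≤ β) : lev u β ⊆ lev u α :=
  fun _ hx => le_trans h hx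

lemma fin_haus {S T : Set X} (hS : IsCompact S) (hSne : S.Nonempty)
    (hT : IsCompact T) (hTne : T.Nonempty) : EMetric.hausdorffEdist S T ≠ ⊤ :=
  hausdorffEdist_ne_top_of_nonempty_of_bounded hSne hTne hS.isBounded hT.isBounded

lemma hd_bound {u v : X → ℝ} (hu : IsFuzzyStar u) (hv : IsFuzzyStar v)
    {α : ℝ} (hα : α ∈ Ioc (0:ℝ) 1) :
    hausdorffDist (lev u α) (lev v α) ≤ Metric.diam (fsupp u ∪ fsupp v) := by
  have hb : Bornology.IsBounded (fsupp u ∪ fsupp v) := (hu.1.2.2.union hv.1.2.2).isBounded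
  apply hausdorffDist_le_of_mem_dist Metric.diam_nonneg
  · intro x hx
    obtain ⟨y, hy⟩ := lev_nonempty hv hα.2
    exact ⟨y, hy, dist_le_diam_of_mem hb (Or.inl (lev_subset_fsupp u hα.1 hx))
      (Or.inr (lev_subset_fsupp v hα.1 hy))⟩
  · intro y hy
    obtain ⟨x, hx⟩ := lev_nonempty hu hα.2
    exact ⟨x, hx, dist_le_diam_of_mem hb (Or.inr (lev_subset_fsupp v hα.1 hy))
      (Or.inl (lev_subset_fsupp u hα.1 hx))⟩

lemma bdd_hd {u v : X → ℝ} (hu : IsFuzzyStar u) (hv : IsFuzzyStar v) :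
    BddAbove (range fun α : Ioc (0:ℝ) 1 => hausdorffDist (lev u α) (lev v α)) := by
  refine ⟨Metric.diam (fsupp u ∪ fsupp v), fun r hr => ?_⟩
  obtain ⟨α, rfl⟩ := hr
  exact hd_bound hu hv α.2

lemma hd_le_dInfty {u v : X → ℝ} (hu : IsFuzzyStar u) (hv : IsFuzzyStar v)
    (α : Ioc (0:ℝ) 1) : hausdorffDist (lev u α) (lev v α) ≤ dInfty u v :=
  le_ciSup (bdd_hd hu hv) α

lemma lev_eq_iInter {u : X → ℝ} (h0 : ∀ x, 0 ≤ u x) {α : ℝ} (hα : 0 < α) :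
    lev u α = ⋂ β : Ioo (0:ℝ) α, lev u β := by
  ext x
  simp only [mem_iInter, lev, mem_setOf_eq]
  constructor
  · exact fun h β => le_trans β.2.2.le h
  · intro h
    by_contra hlt
    push_neg at hlt
    obtain ⟨β, hβ1, hβ2⟩ := exists_between (max_lt hlt hα)
    exact absurd (h ⟨β, lt_of_le_of_lt (le_max_right _ _) hβ1, hβ2⟩)
      (not_le.2 (lt_of_le_of_lt (le_max_left _ _) hβ1))

end Aux

section Metr
variable {X : Type*} [MetricSpace X]

lemma dInfty_self (u : X → ℝ) : dInfty u u = 0 := by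
  rw [dInfty_eq]
  simp [hausdorffDist_self_zero, ciSup_const]

lemma dInfty_eq_zero_iff {u v : X → ℝ} (hu : IsFuzzyStar u) (hv : IsFuzzyStar v) :
    dInfty u v = 0 ↔ u = v := by
  constructor
  · intro h
    have hlev : ∀ α ∈ Ioc (0:ℝ) 1, lev u α = lev v α := by
      intro α hα
      have h1 : hausdorffDist (lev u α) (lev v α) ≤ 0 := by
        rw [← h]; exact hd_le_dInfty hu hv ⟨α, hα⟩
      have h2 : hausdorffDist (lev u α) (lev v α) = 0 :=
        le_antisymm h1 hausdorffDist_nonneg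
      exact ((lev_closed hu α).hausdorffDist_zero_iff_eq (lev_closed hv α)
        (fin_haus (lev_compact hu hα.1) (lev_nonempty hu hα.2)
          (lev_compact hv hα.1) (lev_nonempty hv hα.2))).1 h2
    have key : ∀ a b : X → ℝ, (∀ α ∈ Ioc (0:ℝ) 1, lev a α = lev b α) →
        (∀ x, a x ∈ Icc (0:ℝ) 1) → (∀ x, b x ∈ Icc (0:ℝ) 1) → ∀ x, a x ≤ b x := by
      intro a b hl ha hb x
      by_contra hlt
      push_neg at hlt
      have hα : a x ∈ Ioc (0:ℝ) 1 := ⟨lt_of_le_of_lt (hb x).1 hlt, (ha x).2⟩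
      have hx : x ∈ lev a (a x) := show a x ≤ a x from le_refl _
      rw [hl _ hα] at hx
      exact absurd hx (not_le.2 hlt)
    funext x
    exact le_antisymm (key u v hlev (fun y => hu.1.1 y) (fun y => hv.1.1 y) x)
      (key v u (fun α hα => (hlev α hα).symm) (fun y => hv.1.1 y) (fun y => hu.1.1 y) x)
  · rintro rfl
    exact dInfty_self u

lemma dInfty_comm (u v : X → ℝ) : dInfty u v = dInfty v u := by
  rw [dInfty_eq, dInfty_eq]
  exact iSup_congr fun α => hausdorffDist_comm

lemma dInfty_triangle {u v w : X → ℝ} (hu : IsFuzzyStar u) (hv : IsFuzzyStar v)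
    (hw : IsFuzzyStar w) : dInfty u w ≤ dInfty u v + dInfty v w := by
  rw [dInfty_eq u w]
  apply ciSup_le
  intro α
  calc hausdorffDist (lev u α) (lev w α)
      ≤ hausdorffDist (lev u α) (lev v α) + hausdorffDist (lev v α) (lev w α) :=
        hausdorffDist_triangle (fin_haus (lev_compact hu α.2.1) (lev_nonempty hu α.2.2)
          (lev_compact hv α.2.1) (lev_nonempty hv α.2.2))
    _ ≤ dInfty u v + dInfty v w :=
        add_le_add (hd_le_dInfty hu hv α) (hd_le_dInfty hv hw α)

lemma dInfty_nonneg (u v : X → ℝ) : 0 ≤ dInfty u v :=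
  Real.iSup_nonneg fun _ => hausdorffDist_nonneg

end Metr

theorem fuzzy_complete {X : Type*} [MetricSpace X] [CompleteSpace X]
    (s : ℕ → X → ℝ) (hs : ∀ n, IsFuzzyStar (s n))
    (hc : ∀ ε > 0, ∃ N, ∀ m ≥ N, ∀ n ≥ N, dInfty (s m) (s n) < ε) :
    ∃ v : X → ℝ, IsFuzzyStar v ∧ Tendsto (fun n => dInfty (s n) v) atTop (𝓝 0) := by
  classical
  set L : Ioc (0:ℝ) 1 → ℕ → TopologicalSpace.NonemptyCompacts X :=
    fun α n => ⟨⟨lev (s n) α, lev_compact (hs n) α.2.1⟩, lev_nonempty (hs n) α.2.2⟩ with hL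
  have hcauchy : ∀ α : Ioc (0:ℝ) 1, CauchySeq (L α) := by
    intro α
    rw [Metric.cauchySeq_iff]
    intro ε hε
    obtain ⟨N, hN⟩ := hc ε hε
    exact ⟨N, fun m hm n hn =>
      lt_of_le_of_lt (hd_le_dInfty (hs m) (hs n) α) (hN m hm n hn)⟩
  choose Kc hKc using fun α => cauchySeq_tendsto_of_complete (hcauchy α)
  set K : Ioc (0:ℝ) 1 → Set X := fun α => Kc α with hKdef
  have hKcpt : ∀ α : Ioc (0:ℝ) 1, IsCompact (K α) := fun α => (Kc α).isCompact
  have hKne : ∀ α : Ioc (0:ℝ) 1, (K α).Nonempty := fun α => (Kc α).nonempty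
  have hKcl : ∀ α : Ioc (0:ℝ) 1, IsClosed (K α) := fun α => (hKcpt α).isClosed
  have htend : ∀ α : Ioc (0:ℝ) 1, Tendsto (fun n => hausdorffDist (lev (s n) α) (K α)) atTop (𝓝 0) :=
    fun α => tendsto_iff_dist_tendsto_zero.1 (hKc α)
  have finLK : ∀ n (α : Ioc (0:ℝ) 1), EMetric.hausdorffEdist (lev (s n) α) (K α) ≠ ⊤ := fun n α =>
    fin_haus (lev_compact (hs n) α.2.1) (lev_nonempty (hs n) α.2.2) (hKcpt α) (hKne α)
  have finLL : ∀ m n (α : Ioc (0:ℝ) 1), EMetric.hausdorffEdist (lev (s m) α) (lev (s n) α) ≠ ⊤ := fun m n α =>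
    fin_haus (lev_compact (hs m) α.2.1) (lev_nonempty (hs m) α.2.2)
      (lev_compact (hs n) α.2.1) (lev_nonempty (hs n) α.2.2)
  -- uniform convergence of level sets
  have unif : ∀ ε > (0:ℝ), ∃ N, ∀ n ≥ N, ∀ α : Ioc (0:ℝ) 1, hausdorffDist (lev (s n) α) (K α) ≤ ε := by
    intro ε hε
    obtain ⟨N, hN⟩ := hc ε hε
    refine ⟨N, fun n hn α => ?_⟩
    have hg : Tendsto (fun m => ε + hausdorffDist (lev (s m) α) (K α)) atTop (𝓝 ε) := by
      simpa using tendsto_const_nhds.add (htend α)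
    refine ge_of_tendsto hg ?_
    filter_upwards [eventually_ge_atTop N] with m hm
    calc hausdorffDist (lev (s n) α) (K α)
        ≤ hausdorffDist (lev (s n) α) (lev (s m) α) + hausdorffDist (lev (s m) α) (K α) :=
          hausdorffDist_triangle (finLL n m α)
      _ ≤ ε + hausdorffDist (lev (s m) α) (K α) :=
          add_le_add_left (le_of_lt (lt_of_le_of_lt (hd_le_dInfty (hs n) (hs m) α)
            (hN n hn m hm))) _
  -- monotonicity of the limit sets
  have hKmono : ∀ α β : Ioc (0:ℝ) 1, (α:ℝ) ≤ β → K β ⊆ K α := by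
    intro α β hab x hx
    have key : ∀ n, infDist x (K α) ≤
        hausdorffDist (K β) (lev (s n) β) + hausdorffDist (lev (s n) α) (K α) := by
      intro n
      have h1 : infDist x (lev (s n) β) ≤ hausdorffDist (K β) (lev (s n) β) :=
        infDist_le_hausdorffDist_of_mem hx
          (by rw [EMetric.hausdorffEdist_comm]; exact finLK n β)
      have h2 : infDist x (lev (s n) α) ≤ infDist x (lev (s n) β) :=
        infDist_le_infDist_of_subset (lev_anti _ hab) (lev_nonempty (hs n) β.2.2)
      have h3 : infDist x (K α) ≤ infDist x (lev (s n) α) +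
          hausdorffDist (lev (s n) α) (K α) :=
        infDist_le_infDist_add_hausdorffDist (finLK n α)
      linarith
    have hlim : Tendsto (fun n => hausdorffDist (K β) (lev (s n) β) +
        hausdorffDist (lev (s n) α) (K α)) atTop (𝓝 0) := by
      have t1 : Tendsto (fun n => hausdorffDist (K β) (lev (s n) β)) atTop (𝓝 0) := by
        simpa [hausdorffDist_comm] using htend β
      simpa using t1.add (htend α)
    have h0 : infDist x (K α) ≤ 0 := ge_of_tendsto hlim (Eventually.of_forall key)
    exact ((hKcl α).mem_iff_infDist_zero (hKne α)).2 (le_antisymm h0 infDist_nonneg)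
  -- the candidate limit fuzzy set
  set A : X → Set ℝ := fun x => insert 0 {β : ℝ | ∃ hβ : β ∈ Ioc (0:ℝ) 1, x ∈ K ⟨β, hβ⟩}
    with hA
  set v : X → ℝ := fun x => sSup (A x) with hvdef
  have hAne : ∀ x, (A x).Nonempty := fun x => ⟨0, mem_insert _ _⟩
  have hAle : ∀ x, ∀ β ∈ A x, β ≤ 1 := by
    intro x β hβ
    rcases mem_insert_iff.1 hβ with rfl | ⟨hβ1, _⟩
    · norm_num
    · exact hβ1.2
  have hAbdd : ∀ x, BddAbove (A x) := fun x => ⟨1, fun β hβ => hAle x β hβ⟩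
  have hv0 : ∀ x, 0 ≤ v x := fun x => le_csSup (hAbdd x) (mem_insert _ _)
  have hv1 : ∀ x, v x ≤ 1 := fun x => csSup_le (hAne x) (hAle x)
  have memA : ∀ (β : Ioc (0:ℝ) 1) x, x ∈ K β → (β:ℝ) ∈ A x := fun β x hx =>
    mem_insert_of_mem _ ⟨β.2, hx⟩
  set e : (α : Ioc (0:ℝ) 1) → Ioo (0:ℝ) (α:ℝ) → Ioc (0:ℝ) 1 :=
    fun α β => ⟨β.1, β.2.1, β.2.2.le.trans α.2.2⟩ with he
  -- level sets of v
  have hv_lev : ∀ α : Ioc (0:ℝ) 1, lev v α = ⋂ β : Ioo (0:ℝ) (α:ℝ), K (e α β) := by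
    intro α
    ext x
    simp only [lev, mem_setOf_eq, mem_iInter]
    constructor
    · intro h β
      obtain ⟨γ, hγA, hγ⟩ := exists_lt_of_lt_csSup (hAne x) (lt_of_lt_of_le β.2.2 h)
      rcases mem_insert_iff.1 hγA with rfl | ⟨hγ1, hγ2⟩
      · exact absurd β.2.1 (by linarith)
      · exact hKmono (e α β) ⟨γ, hγ1⟩ hγ.le hγ2
    · intro h
      by_contra hlt
      push_neg at hlt
      obtain ⟨β, hβ1, hβ2⟩ := exists_between (max_lt hlt α.2.1)
      have hβ0 : 0 < β := lt_of_le_of_lt (le_max_right _ _) hβ1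
      have hβm : β ∈ A x :=
        memA (e α ⟨β, hβ0, hβ2⟩) x (h ⟨β, hβ0, hβ2⟩)
      exact absurd (le_csSup (hAbdd x) hβm)
        (not_le.2 (lt_of_le_of_lt (le_max_left _ _) hβ1))
  -- normality
  have hvnorm : ∃ x, v x = 1 := by
    obtain ⟨x, hx⟩ := hKne ⟨1, by norm_num⟩
    exact ⟨x, le_antisymm (hv1 x)
      (le_csSup (hAbdd x) (memA ⟨1, by norm_num⟩ x hx))⟩
  -- usc
  have hlevclosed : ∀ α : Ioc (0:ℝ) 1, IsClosed (lev v α) := by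
    intro α
    rw [hv_lev α]
    exact isClosed_iInter fun β => hKcl _
  have husc : UpperSemicontinuous v := by
    rw [upperSemicontinuous_iff_isClosed_preimage]
    intro y
    rcases le_or_gt y 0 with hy | hy
    · have h : v ⁻¹' Ici y = univ := eq_univ_of_forall fun x => le_trans hy (hv0 x)
      rw [h]; exact isClosed_univ
    rcases le_or_gt y 1 with hy1 | hy1
    · exact hlevclosed ⟨y, hy, hy1⟩
    · have h : v ⁻¹' Ici y = ∅ := eq_empty_iff_forall_notMem.2 fun x hx =>
        absurd (le_trans hx (hv1 x)) (not_le.2 hy1)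
      rw [h]; exact isClosed_empty
  -- compact support
  have hTB : TotallyBounded (⋃ α : Ioc (0:ℝ) 1, K α) := by
    rw [totallyBounded_iff]
    intro ε hε
    obtain ⟨N, hN⟩ := unif (ε/4) (by linarith)
    obtain ⟨t, htfin, htcov⟩ :=
      totallyBounded_iff.1 ((hs N).1.2.2.totallyBounded) (ε/2) (by linarith)
    refine ⟨t, htfin, ?_⟩
    intro y hy
    obtain ⟨α, hyα⟩ := mem_iUnion.1 hy
    have h1 : infDist y (lev (s N) α) ≤ ε/4 := by
      refine le_trans (infDist_le_hausdorffDist_of_mem hyα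
        (by rw [EMetric.hausdorffEdist_comm]; exact finLK N α)) ?_
      rw [hausdorffDist_comm]
      exact hN N le_rfl α
    have h14 : ε/4 < ε/2 := by linarith
    obtain ⟨z, hz, hdz⟩ := (infDist_lt_iff (lev_nonempty (hs N) α.2.2)).1
      (lt_of_le_of_lt h1 h14)
    have hz2 : z ∈ ⋃ c ∈ t, ball c (ε/2) := htcov (lev_subset_fsupp _ α.2.1 hz)
    obtain ⟨c, hc, hzc⟩ := mem_iUnion₂.1 hz2
    refine mem_iUnion₂.2 ⟨c, hc, ?_⟩
    have : dist y c ≤ dist y z + dist z c := dist_triangle _ _ _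
    rw [mem_ball] at hzc ⊢
    linarith
  have hsuppv : IsCompact (fsupp v) := by
    have hsub : {x | 0 < v x} ⊆ ⋃ α : Ioc (0:ℝ) 1, K α := by
      intro x hx
      obtain ⟨γ, hγA, hγ⟩ := exists_lt_of_lt_csSup (hAne x) hx
      rcases mem_insert_iff.1 hγA with rfl | ⟨hγ1, hγ2⟩
      · exact absurd hγ (lt_irrefl _)
      · exact mem_iUnion.2 ⟨⟨γ, hγ1⟩, hγ2⟩
    have hcpt : IsCompact (closure (⋃ α : Ioc (0:ℝ) 1, K α)) :=
      TotallyBounded.isCompact_of_isClosed hTB.closure isClosed_closure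
    exact IsCompact.of_isClosed_subset hcpt isClosed_closure (closure_mono hsub)
  -- the key Hausdorff distance estimate
  have hest : ∀ n (ε : ℝ), 0 ≤ ε →
      (∀ γ : Ioc (0:ℝ) 1, hausdorffDist (lev (s n) γ) (K γ) ≤ ε) →
      ∀ α : Ioc (0:ℝ) 1, hausdorffDist (lev (s n) α) (lev v α) ≤ ε := by
    intro n ε hε hγ α
    haveI hneI : Nonempty (Ioo (0:ℝ) (α:ℝ)) := (nonempty_Ioo.2 α.2.1).to_subtype
    apply hausdorffDist_le_of_mem_dist hε
    · intro x hx
      have hne : ∀ β : Ioo (0:ℝ) (α:ℝ), (K (e α β) ∩ closedBall x ε).Nonempty := by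
        intro β
        have hmem : x ∈ lev (s n) ((e α β : Ioc (0:ℝ) 1) : ℝ) :=
          lev_anti _ β.2.2.le hx
        have h1 : infDist x (K (e α β)) ≤ ε :=
          le_trans (infDist_le_hausdorffDist_of_mem hmem (finLK n (e α β))) (hγ (e α β))
        obtain ⟨z, hz1, hz2⟩ := (hKcpt (e α β)).exists_infDist_eq_dist (hKne (e α β)) x
        refine ⟨z, hz1, ?_⟩
        rw [mem_closedBall, dist_comm, ← hz2]
        exact h1
      have hdir : Directed (· ⊇ ·) (fun β : Ioo (0:ℝ) (α:ℝ) => K (e α β) ∩ closedBall x ε) := by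
        intro β₁ β₂
        refine ⟨⟨max β₁.1 β₂.1, lt_max_of_lt_left β₁.2.1, max_lt β₁.2.2 β₂.2.2⟩,
          inter_subset_inter_left _ (hKmono _ _ (le_max_left _ _)),
          inter_subset_inter_left _ (hKmono _ _ (le_max_right _ _))⟩
      obtain ⟨y, hy⟩ := IsCompact.nonempty_iInter_of_directed_nonempty_isCompact_isClosed
        (fun β : Ioo (0:ℝ) (α:ℝ) => K (e α β) ∩ closedBall x ε) hdir hne
        (fun β => (hKcpt (e α β)).inter_right isClosed_closedBall)
        (fun β => (hKcl (e α β)).inter isClosed_closedBall)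
      refine ⟨y, ?_, ?_⟩
      · rw [hv_lev α]
        exact mem_iInter.2 fun β => (mem_iInter.1 hy β).1
      · have hyb := (mem_iInter.1 hy (Classical.arbitrary _)).2
        rw [mem_closedBall] at hyb
        rw [dist_comm]
        exact hyb
    · intro y hy
      rw [hv_lev α] at hy
      have hy' := mem_iInter.1 hy
      have hne : ∀ β : Ioo (0:ℝ) (α:ℝ), (lev (s n) ((e α β : Ioc (0:ℝ) 1) : ℝ) ∩
          closedBall y ε).Nonempty := by
        intro β
        have h1 : infDist y (lev (s n) ((e α β : Ioc (0:ℝ) 1) : ℝ)) ≤ ε := by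
          refine le_trans (infDist_le_hausdorffDist_of_mem (hy' β)
            (by rw [EMetric.hausdorffEdist_comm]; exact finLK n (e α β))) ?_
          rw [hausdorffDist_comm]
          exact hγ (e α β)
        obtain ⟨z, hz1, hz2⟩ := (lev_compact (hs n) (e α β).2.1).exists_infDist_eq_dist
          (lev_nonempty (hs n) (e α β).2.2) y
        refine ⟨z, hz1, ?_⟩
        rw [mem_closedBall, dist_comm, ← hz2]
        exact h1
      have hdir : Directed (· ⊇ ·) (fun β : Ioo (0:ℝ) (α:ℝ) =>
          lev (s n) ((e α β : Ioc (0:ℝ) 1) : ℝ) ∩ closedBall y ε) := by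
        intro β₁ β₂
        refine ⟨⟨max β₁.1 β₂.1, lt_max_of_lt_left β₁.2.1, max_lt β₁.2.2 β₂.2.2⟩,
          inter_subset_inter_left _ (lev_anti _ (le_max_left _ _)),
          inter_subset_inter_left _ (lev_anti _ (le_max_right _ _))⟩
      obtain ⟨x, hx⟩ := IsCompact.nonempty_iInter_of_directed_nonempty_isCompact_isClosed
        (fun β : Ioo (0:ℝ) (α:ℝ) => lev (s n) ((e α β : Ioc (0:ℝ) 1) : ℝ) ∩ closedBall y ε)
        hdir hne
        (fun β => (lev_compact (hs n) (e α β).2.1).inter_right isClosed_closedBall)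
        (fun β => (lev_closed (hs n) _).inter isClosed_closedBall)
      refine ⟨x, ?_, ?_⟩
      · rw [lev_eq_iInter (fun z => ((hs n).1.1 z).1) α.2.1]
        exact mem_iInter.2 fun β => (mem_iInter.1 hx β).1
      · have hxb := (mem_iInter.1 hx (Classical.arbitrary _)).2
        rw [mem_closedBall] at hxb
        rw [dist_comm]
        exact hxb
  -- assemble
  refine ⟨v, ⟨⟨fun x => ⟨hv0 x, hv1 x⟩, hvnorm, hsuppv⟩, husc⟩, ?_⟩
  rw [Metric.tendsto_atTop]
  intro ε hε
  obtain ⟨N, hN⟩ := unif (ε/2) (by linarith)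
  refine ⟨N, fun n hn => ?_⟩
  have h1 : dInfty (s n) v ≤ ε/2 := by
    rw [dInfty_eq]
    exact ciSup_le fun α => hest n (ε/2) (by linarith) (fun γ => hN n hn γ) α
  rw [Real.dist_eq, sub_zero, abs_of_nonneg (dInfty_nonneg _ _)]
  linarith

set_option maxHeartbeats 1000000 in
/-- `(F*_X, d_∞)` is a complete metric space: `d_∞` is a metric on the
upper semicontinuous normal compactly supported fuzzy sets, and every Cauchy sequence
converges to an element of `F*_X`. -/
theorem stmt17 {X : Type*} [MetricSpace X] [CompleteSpace X] :
    (∀ u v : X → ℝ, IsFuzzyStar u → IsFuzzyStar v → (dInfty u v = 0 ↔ u = v)) ∧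
    (∀ u v : X → ℝ, IsFuzzyStar u → IsFuzzyStar v → dInfty u v = dInfty v u) ∧
    (∀ u v w : X → ℝ, IsFuzzyStar u → IsFuzzyStar v → IsFuzzyStar w →
      dInfty u w ≤ dInfty u v + dInfty v w) ∧
    (∀ s : ℕ → X → ℝ, (∀ n, IsFuzzyStar (s n)) →
      (∀ ε > 0, ∃ N, ∀ m ≥ N, ∀ n ≥ N, dInfty (s m) (s n) < ε) →
      ∃ v : X → ℝ, IsFuzzyStar v ∧
        Tendsto (fun n => dInfty (s n) v) atTop (nhds 0)) := by
  exact ⟨fun u v hu hv => dInfty_eq_zero_iff hu hv,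
    fun u v _ _ => dInfty_comm u v,
    fun u v w hu hv hw => dInfty_triangle hu hv hw,
    fun s hs hc => fuzzy_complete s hs hc⟩
end
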